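/- arXiv:1607.02790 — 7 statements merged into one kernel-verified Lean document; each statement's English description precedes it below -/
import Mathlib

section
/- For every ρ ∈ D(Fin n) and every a ∈ A, hyper normalisation satisfies N(st₁(ρ, a)) = st₁(ρ, η(a)); explicitly, N applied to the distribution (i,a') ↦ (ρ(i) if a' = a, else 0) equals the distribution on Fin n × D(A) assigning ρ(i) to (i, η(a)) for each i. -/
open scoped ENNReal

noncomputable section

namespace HyperNorm

variable {A B : Type*} {n m : ℕ}

def fmass (ω : PMF (Fin n × A)) (i : Fin n) : ℝ≥0∞ := ∑' a, ω (i, a)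

lemma tsum_fmass (ω : PMF (Fin n × A)) : ∑' i, fmass ω i = 1 := by
  simp only [fmass]
  rw [← ENNReal.tsum_prod']
  exact ω.tsum_coe

lemma fmass_ne_top (ω : PMF (Fin n × A)) (i : Fin n) : fmass ω i ≠ ⊤ := by
  apply ne_top_of_le_ne_top ENNReal.one_ne_top
  rw [← tsum_fmass ω]
  exact ENNReal.le_tsum i

def fstM (ω : PMF (Fin n × A)) : PMF (Fin n) :=
  ⟨fun i => fmass ω i, ENNReal.summable.hasSum_iff.mpr (tsum_fmass ω)⟩

def ncond (ω : PMF (Fin n × A)) (i : Fin n) : PMF A :=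
  if h : fmass ω i ≠ 0 then
    ⟨fun a => ω (i, a) / fmass ω i,
      ENNReal.summable.hasSum_iff.mpr (by
        simp only [div_eq_mul_inv]
        rw [ENNReal.tsum_mul_right, ← div_eq_mul_inv]
        exact ENNReal.div_self h (fmass_ne_top ω i))⟩
  else PMF.pure (ω.support_nonempty.some.2)

def hnorm (ω : PMF (Fin n × A)) : PMF (Fin n × PMF A) :=
  (fstM ω).bind fun i => PMF.pure (i, ncond ω i)

def gr {X Y : Type*} (f : X → PMF Y) : X → PMF (Y × X) :=
  fun x => (f x).map fun y => (y, x)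

open Classical in
lemma map_apply' (ρ : PMF (Fin n)) (a : A) (i : Fin n) (b : A) :
    (ρ.map fun i => (i, a)) (i, b) = if b = a then ρ i else 0 := by
  rw [PMF.map_apply]
  rw [tsum_eq_single i ?side]
  case side =>
    intro j hj
    rw [if_neg]
    simp only [Prod.mk.injEq, not_and]
    intro h _
    exact absurd h.symm hj
  split_ifs with h1 h2 h2 <;> simp_all [Prod.ext_iff]

lemma fmass_map (ρ : PMF (Fin n)) (a : A) (i : Fin n) :
    fmass (ρ.map fun i => (i, a)) i = ρ i := by
  simp only [fmass, map_apply']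
  rw [tsum_eq_single a (by intro b hb; simp [hb])]
  simp

lemma ncond_map (ρ : PMF (Fin n)) (a : A) (i : Fin n) (h : ρ i ≠ 0) :
    ncond (ρ.map fun i => (i, a)) i = PMF.pure a := by
  have hf : fmass (ρ.map fun i => (i, a)) i ≠ 0 := by rw [fmass_map]; exact h
  ext b
  erw [ncond, dif_pos hf]
  show (ρ.map fun i => (i, a)) (i, b) / fmass (ρ.map fun i => (i, a)) i = _
  rw [map_apply', fmass_map]
  by_cases hb : b = a
  · simp [hb, ENNReal.div_self h (PMF.apply_ne_top ρ i)]
  · simp [hb, Ne.symm hb]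

/-- `N(st₁(ρ, a)) = st₁(ρ, η(a))`. -/
theorem hnorm_st1 (ρ : PMF (Fin n)) (a : A) :
    hnorm (ρ.map fun i => (i, a)) = ρ.map fun i => (i, PMF.pure a) := by
  ext ⟨j, p⟩
  rw [hnorm, PMF.bind_apply, PMF.map_apply]
  rw [tsum_eq_single j (by intro i hi; simp only [PMF.pure_apply, Prod.ext_iff]; rw [if_neg, mul_zero]; intro h; exact hi ((Prod.ext_iff.mp h).1.symm))]
  rw [tsum_eq_single j (by intro i hi; rw [if_neg]; simp only [Prod.mk.injEq, not_and]; intro h _; exact absurd h.symm hi)]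
  show fmass (ρ.map fun i => (i, a)) j * _ = _
  rw [fmass_map]
  by_cases h : ρ j = 0
  · simp [h]
  · rw [ncond_map ρ a j h]
    simp only [PMF.pure_apply]
    by_cases hq : (j, p) = (j, PMF.pure a) <;> simp [hq]

end HyperNorm
end
end

section
/- Hyper normalisation is idempotent: for every ω ∈ D(Fin n × A), N(N(ω)) = D(id × η)(N(ω)), where the outer N is the hyper normalisation D(Fin n × D(A)) → D(Fin n × D(D(A))) and id × η : Fin n × D(A) → Fin n × D(D(A)) sends (i,φ) to (i, η(φ)). Consequently D(id × μ)(N(N(ω))) = N(ω). -/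
open scoped ENNReal

noncomputable section

namespace HyperNorm

variable {A B : Type*} {n m : ℕ}

open scoped Classical

lemma bind_congr' {α β : Type*} {p : PMF α} {f g : α → PMF β}
    (h : ∀ a, p a ≠ 0 → f a = g a) : p.bind f = p.bind g := by
  ext b
  simp only [PMF.bind_apply]
  refine tsum_congr fun a => ?_
  by_cases ha : p a = 0
  · simp [ha]
  · rw [h a ha]

lemma fstM_apply (ω : PMF (Fin n × A)) (i : Fin n) : fstM ω i = fmass ω i := rfl

lemma hnorm_apply (ω : PMF (Fin n × A)) (j : Fin n) (φ : PMF A) :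
    hnorm ω (j, φ) = if φ = ncond ω j then fmass ω j else 0 := by
  simp only [hnorm, PMF.bind_apply, PMF.pure_apply, fstM_apply]
  rw [tsum_eq_single j]
  · by_cases h : φ = ncond ω j <;> simp [h, Prod.ext_iff]
  · intro i hi
    have : (j, φ) ≠ (i, ncond ω i) := fun h => hi (congrArg Prod.fst h).symm
    simp [this]

lemma fmass_hnorm (ω : PMF (Fin n × A)) (j : Fin n) :
    fmass (hnorm ω) j = fmass ω j := by
  simp only [fmass, hnorm_apply]
  rw [tsum_eq_single (ncond ω j)] <;> simp +contextual [fmass]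

lemma ncond_hnorm (ω : PMF (Fin n × A)) (j : Fin n) (h : fmass ω j ≠ 0) :
    ncond (hnorm ω) j = PMF.pure (ncond ω j) := by
  have h' : fmass (hnorm ω) j ≠ 0 := by rwa [fmass_hnorm]
  ext φ
  rw [show ncond (hnorm ω) j φ = hnorm ω (j, φ) / fmass (hnorm ω) j from
    congrArg (fun q : PMF (PMF A) => q φ) (dif_pos h' : ncond (hnorm ω) j = _)]
  show hnorm ω (j, φ) / fmass (hnorm ω) j = _
  rw [hnorm_apply, fmass_hnorm, PMF.pure_apply]
  by_cases hφ : φ = ncond ω j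
  · simp [hφ, ENNReal.div_self h (fmass_ne_top ω j)]
  · simp [hφ]

lemma fstM_hnorm (ω : PMF (Fin n × A)) : fstM (hnorm ω) = fstM ω := by
  ext i
  rw [fstM_apply, fstM_apply, fmass_hnorm]

/-- hyper normalisation is idempotent: `N(N(ω)) = D(id × η)(N(ω))`,
and consequently `D(id × μ)(N(N(ω))) = N(ω)`. -/
theorem hnorm_idem (ω : PMF (Fin n × A)) :
    hnorm (hnorm ω) = (hnorm ω).map (fun p => (p.1, PMF.pure p.2)) ∧
    (hnorm (hnorm ω)).map (fun p => (p.1, p.2.bind id)) = hnorm ω := by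
  have e1 : hnorm (hnorm ω) = (fstM ω).bind fun i => PMF.pure (i, ncond (hnorm ω) i) := by
    rw [← fstM_hnorm ω]; rfl
  have e2 : (hnorm ω).map (fun p => (p.1, PMF.pure p.2)) =
      (fstM ω).bind fun i => PMF.pure (i, PMF.pure (ncond ω i)) := by
    show ((fstM ω).bind fun i => PMF.pure (i, ncond ω i)).map _ = _
    rw [PMF.map_bind]
    simp only [PMF.pure_map]
  have h1 : hnorm (hnorm ω) = (hnorm ω).map (fun p => (p.1, PMF.pure p.2)) := by
    rw [e1, e2]
    exact bind_congr' fun i hi => by rw [ncond_hnorm ω i hi]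
  refine ⟨h1, ?_⟩
  rw [h1, PMF.map_comp]
  have hc : ((fun p : Fin n × PMF (PMF A) => (p.1, p.2.bind id)) ∘
      fun p : Fin n × PMF A => (p.1, PMF.pure p.2)) = id := by
    funext p
    simp
  rw [hc, PMF.map_id]

end HyperNorm
end
end

section
/- Hyper normalisation is a split monomorphism: for every ω ∈ D(Fin n × A), (st₂)_*(N(ω)) = ω, where st₂ : Fin n × D(A) → D(Fin n × A) is the strength map and (st₂)_* its Kleisli extension D(Fin n × D(A)) → D(Fin n × A). -/
open scoped ENNReal

noncomputable section

namespace HyperNorm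

variable {A B : Type*} {n m : ℕ}

/-- hyper normalisation is a split mono: `(st₂)_*(N(ω)) = ω`. -/
theorem hnorm_split_mono (ω : PMF (Fin n × A)) :
    (hnorm ω).bind (fun p => p.2.map fun a => (p.1, a)) = ω := by
  ext ⟨j, a⟩
  rw [hnorm, PMF.bind_bind]
  simp only [PMF.pure_bind]
  rw [PMF.bind_apply]
  have key : ∀ i : Fin n,
      (fstM ω) i * ((ncond ω i).map fun a => (i, a)) (j, a)
        = if i = j then ω (j, a) else 0 := by
    intro i
    rw [PMF.map_apply]
    by_cases hij : i = j
    · subst hij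
      rw [if_pos rfl, tsum_eq_single a
        (fun b hb => if_neg (fun h => hb ((Prod.ext_iff.mp h).2.symm))), if_pos rfl]
      by_cases h : fmass ω i = 0
      · have hza : ω (i, a) = 0 := le_antisymm (h ▸ ENNReal.le_tsum a) zero_le
        show fmass ω i * _ = ω (i, a)
        rw [h, zero_mul, hza]
      · rw [show ncond ω i = _ from dif_pos h]
        show fmass ω i * (ω (i, a) / fmass ω i) = _
        rw [ENNReal.mul_div_cancel h (fmass_ne_top ω i)]
    · rw [if_neg hij, ENNReal.tsum_eq_zero.mpr
        (fun b => if_neg (fun h => hij ((Prod.ext_iff.mp h).1.symm))), mul_zero]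
  rw [tsum_congr key, tsum_eq_single j (by intro i hi; rw [if_neg hi]), if_pos rfl]

end HyperNorm
end
end

section
/- Hyper normalisation is natural in the set parameter for Kleisli maps: for every g : A → D(B), writing n·g : Fin n × A → D(Fin n × B) for the map (i,a) ↦ Σ_b g(a)(b)·η(i,b), one has N((n·g)_*(ω)) = D(id × g_*)(N(ω)) for every ω ∈ D(Fin n × A), where id × g_* : Fin n × D(A) → Fin n × D(B) sends (i,φ) to (i, g_*(φ)). -/
open scoped ENNReal

noncomputable section

namespace HyperNorm

variable {A B : Type*} {n m : ℕ}

lemma bindmap_apply (g : A → PMF B) (ω : PMF (Fin n × A)) (i : Fin n) (b : B) :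
    (ω.bind fun p => (g p.2).map fun b => (p.1, b)) (i, b)
      = ∑' a, ω (i, a) * g a b := by
  classical
  rw [PMF.bind_apply, ENNReal.tsum_prod']
  have key : ∀ j : Fin n, ∀ a : A,
      ω (j, a) * ((g a).map fun b' => (j, b')) (i, b)
        = if i = j then ω (i, a) * g a b else 0 := by
    intro j a
    rw [PMF.map_apply]
    by_cases h : i = j
    · subst h
      simp only [if_pos rfl]
      congr 1
      rw [tsum_eq_single b]
      · rw [if_pos rfl]
      · intro b' hb
        rw [if_neg]
        simp only [Prod.mk.injEq, true_and]
        exact fun h => hb h.symm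
    · have hz : ∀ b' : B, (if (i, b) = (j, b') then (g a) b' else 0) = 0 := by
        intro b'; rw [if_neg]; simp only [Prod.mk.injEq]; exact fun hc => h hc.1
      simp [hz, h]
  simp only [key]
  have h2 : ∀ j : Fin n, (∑' a : A, if i = j then ω (i, a) * g a b else 0)
      = if j = i then ∑' a : A, ω (i, a) * g a b else 0 := by
    intro j
    by_cases hj : i = j
    · subst hj; simp
    · simp only [if_neg hj, if_neg (fun h : j = i => hj h.symm), tsum_zero]
  rw [tsum_congr h2, tsum_ite_eq]

lemma fmass_bindmap (g : A → PMF B) (ω : PMF (Fin n × A)) (i : Fin n) :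
    fmass (ω.bind fun p => (g p.2).map fun b => (p.1, b)) i = fmass ω i := by
  simp only [fmass, bindmap_apply]
  rw [ENNReal.tsum_comm]
  apply tsum_congr
  intro a
  rw [ENNReal.tsum_mul_left, (g a).tsum_coe, mul_one]

lemma ncond_apply_of_ne {C : Type*} (ν : PMF (Fin n × C)) (i : Fin n) (hν : fmass ν i ≠ 0)
    (a : C) : ncond ν i a = ν (i, a) / fmass ν i := by
  have e := congrArg (fun q : PMF C => q a) (dif_pos hν : ncond ν i = _)
  exact e

lemma ncond_bindmap (g : A → PMF B) (ω : PMF (Fin n × A)) (i : Fin n)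
    (h : fmass ω i ≠ 0) :
    ncond (ω.bind fun p => (g p.2).map fun b => (p.1, b)) i = (ncond ω i).bind g := by
  have h' : fmass (ω.bind fun p => (g p.2).map fun b => (p.1, b)) i ≠ 0 := by
    rwa [fmass_bindmap]
  ext b
  rw [PMF.bind_apply]
  simp only [ncond_apply_of_ne _ _ h', ncond_apply_of_ne _ _ h]
  show (ω.bind fun p => (g p.2).map fun b => (p.1, b)) (i, b)
      / fmass (ω.bind fun p => (g p.2).map fun b => (p.1, b)) i
    = ∑' a, ω (i, a) / fmass ω i * g a b
  rw [fmass_bindmap, bindmap_apply]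
  simp only [div_eq_mul_inv]
  rw [← ENNReal.tsum_mul_right]
  exact tsum_congr fun a => by ring

/-- naturality of `N` for Kleisli maps:
`N((n·g)_*(ω)) = D(id × g_*)(N(ω))` where `(n·g)(i,a) = Σ_b g(a)(b)·η(i,b)`. -/
theorem hnorm_kleisli_natural (g : A → PMF B) (ω : PMF (Fin n × A)) :
    hnorm (ω.bind fun p => (g p.2).map fun b => (p.1, b)) =
      (hnorm ω).map fun p => (p.1, p.2.bind g) := by
  set ω' := ω.bind fun p => (g p.2).map fun b => (p.1, b) with hω'
  have hrhs : (hnorm ω).map (fun p => (p.1, p.2.bind g))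
      = (fstM ω).bind fun i => PMF.pure (i, (ncond ω i).bind g) := by
    simp only [hnorm, PMF.map_bind, PMF.pure_map]
  rw [hrhs]
  have hfst : ∀ i, fstM ω' i = fstM ω i := fun i => fmass_bindmap g ω i
  ext x
  simp only [hnorm, PMF.bind_apply]
  apply tsum_congr
  intro i
  by_cases h : fmass ω i = 0
  · have h1 : fstM ω' i = 0 := by rw [hfst]; exact h
    have h2 : fstM ω i = 0 := h
    rw [h1, h2, zero_mul, zero_mul]
  · rw [hfst, ncond_bindmap g ω i h]

end HyperNorm
end
end

section
/- Hyper normalisation is not an affine map: for A = Bool and n = 2, N( (1/4)·η(0,false) + (3/4)·η(0,true) ) ≠ (1/4)·N(η(0,false)) + (3/4)·N(η(0,true)), where convex combinations of distributions are taken pointwise. Concretely, the left-hand side is the point mass at (0, φ) with φ(false) = 1/4 and φ(true) = 3/4, while the right-hand side assigns probability 1/4 to (0, η(false)) and 3/4 to (0, η(true)), and these two distributions on Fin 2 × D(Bool) are distinct. -/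
open scoped ENNReal

noncomputable section

namespace HyperNorm

variable {A B : Type*} {n m : ℕ}

lemma ncond_apply (ω : PMF (Fin n × A)) (i : Fin n) (h : fmass ω i ≠ 0) (a : A) :
    ncond ω i a = ω (i,a) / fmass ω i := by
  simp [ncond, h]
  rfl

/-- hyper normalisation is not affine:
`N(¼·η(0,false) + ¾·η(0,true)) ≠ ¼·N(η(0,false)) + ¾·N(η(0,true))`. -/
theorem hnorm_not_affine :
    hnorm ((PMF.bernoulli (3/4)
          (by rw [div_le_one₀ (by norm_num)]; norm_num)).map
        fun b => ((0 : Fin 2), b)) ≠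
      (PMF.bernoulli (3/4)
          (by rw [div_le_one₀ (by norm_num)]; norm_num)).bind
        fun b => hnorm (PMF.pure ((0 : Fin 2), b)) := by
  intro h
  set β := PMF.bernoulli (3/4:NNReal)
          (by rw [div_le_one₀ (by norm_num)]; norm_num) with hβ
  set ω : PMF (Fin 2 × Bool) := β.map (fun b => ((0 : Fin 2), b)) with hω
  have hωapp : ∀ i a, ω (i, a) = if i = 0 then β a else 0 := by
    intro i a
    rw [hω, PMF.map_apply, tsum_bool]
    fin_cases i <;> cases a <;> simp [Prod.ext_iff]
  have hm0 : fmass ω 0 = 1 := by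
    rw [fmass, tsum_bool, hωapp, hωapp]
    have h34 : (3/4:NNReal) ≤ 1 := by
      rw [div_le_one₀ (by norm_num)]; norm_num
    simp only [hβ, PMF.bernoulli_apply, Bool.cond_false, Bool.cond_true, if_true,
      show ((0:Fin 2) = 0) = True from by simp]
    rw [← ENNReal.coe_add, tsub_add_cancel_of_le h34]; rfl
  have hm1 : fmass ω 1 = 0 := by
    rw [fmass, tsum_bool, hωapp, hωapp]; norm_num
  have hq := DFunLike.congr_fun h ((0 : Fin 2), ncond ω 0)
  have hL : hnorm ω ((0 : Fin 2), ncond ω 0) = 1 := by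
    rw [hnorm, PMF.bind_apply, tsum_fintype, Fin.sum_univ_two]
    show fmass ω 0 * _ + fmass ω 1 * _ = 1
    rw [hm0, hm1, PMF.pure_apply, if_pos rfl]
    ring
  have hpm : ∀ (b : Bool) (i : Fin 2), fmass (PMF.pure ((0:Fin 2), b)) i
      = if i = 0 then 1 else 0 := by
    intro b i
    rw [fmass, tsum_bool]
    fin_cases i <;> cases b <;> simp [Prod.ext_iff]
  have h44 : (4:ℝ≥0∞)/4 = 1 := ENNReal.div_self (by norm_num) (by norm_num)
  have h14 : (1:ℝ≥0∞) - 3/4 = 1/4 :=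
    ENNReal.sub_eq_of_eq_add (ne_top_of_le_ne_top ENNReal.one_ne_top (by rw [ENNReal.div_le_iff (by norm_num) (by norm_num)]; norm_num))
      (by rw [ENNReal.div_add_div_same, show (1:ℝ≥0∞)+3 = 4 by norm_num, h44])
  have hncω : ncond ω 0 false = 1/4 := by
    rw [ncond_apply _ _ (by rw [hm0]; norm_num), hm0, hωapp]
    have h14' : (1:NNReal) - 3/4 = 1/4 := by
      rw [tsub_eq_iff_eq_add_of_le (by rw [div_le_one₀ (by norm_num)]; norm_num)]; norm_num
    simp [hβ, PMF.bernoulli_apply, h14']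
  have hne : ∀ b : Bool, ncond ω 0 ≠ ncond (PMF.pure ((0:Fin 2), b)) 0 := by
    intro b hc
    have h1 : ncond ω 0 false = ncond (PMF.pure ((0:Fin 2), b)) 0 false := by rw [hc]
    rw [hncω, ncond_apply _ _ (by rw [hpm]; norm_num), hpm] at h1
    cases b <;> simp [PMF.pure_apply, Prod.ext_iff] at h1
  have hR : (β.bind fun b => hnorm (PMF.pure ((0:Fin 2), b))) ((0:Fin 2), ncond ω 0) = 0 := by
    rw [PMF.bind_apply, tsum_bool]
    have hz : ∀ b : Bool, hnorm (PMF.pure ((0:Fin 2), b)) ((0:Fin 2), ncond ω 0) = 0 := by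
      intro b
      rw [hnorm, PMF.bind_apply, tsum_fintype, Fin.sum_univ_two]
      show fmass _ 0 * _ + fmass _ 1 * _ = 0
      rw [hpm b 0, hpm b 1, PMF.pure_apply,
        if_neg (show ¬((0:Fin 2), ncond ω 0) = ((0:Fin 2), ncond (PMF.pure ((0:Fin 2),b)) 0)
          from fun he => hne b (congrArg Prod.snd he))]
      simp
    rw [hz, hz]
    simp
  rw [hL, hR] at hq
  exact one_ne_zero hq

end HyperNorm
end
end

section
/- Formula for hyper conditioning in terms of traditional conditioning: for every ω ∈ D(A) and every n-test t : A → D(Fin n) with component predicates p_i(a) = t(a)(i), the hyper conditional satisfies ω‖t = Σ_{i with ω ⊨ p_i ≠ 0} (ω ⊨ p_i)·η(i, ω|p_i), where ω|p_i is the traditionally normalised conditional distribution. -/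
open scoped ENNReal

noncomputable section

namespace HyperNorm

variable {A B : Type*} {n m : ℕ}

/-- `ω‖t = Σ_{i with ω ⊨ p_i ≠ 0} (ω ⊨ p_i)·η(i, ω|p_i)`, where
`p_i(a) = t(a)(i)`, `ω ⊨ p_i = Σ_a ω(a)·t(a)(i)`, the outer distribution `v` has
`v(i) = ω ⊨ p_i`, and `c i` is the conditional `ω|p_i` whenever `ω ⊨ p_i ≠ 0`. -/
theorem hypcond_formula (ω : PMF A) (t : A → PMF (Fin n))
    (v : PMF (Fin n)) (hv : ∀ i, v i = ∑' a, ω a * t a i)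
    (c : Fin n → PMF A)
    (hc : ∀ i, (∑' a, ω a * t a i) ≠ 0 →
      ∀ a, c i a = ω a * t a i / ∑' a', ω a' * t a' i) :
    hnorm (ω.bind (gr t)) = v.bind fun i => PMF.pure (i, c i) := by
  classical
  have happ : ∀ (i : Fin n) (a : A), (ω.bind (gr t)) (i, a) = ω a * t a i := by
    intro i a
    simp only [PMF.bind_apply, gr, PMF.map_apply]
    rw [← show (∑' b', if b' = a then ω a * t a i else 0) = ω a * t a i from tsum_ite_eq a (fun _ => ω a * t a i)]
    refine tsum_congr fun x => ?_
    rcases eq_or_ne x a with h | h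
    · subst h
      rw [if_pos rfl]
      congr 1
      rw [← show (∑' b', if b' = i then t x i else 0) = t x i from tsum_ite_eq i (fun _ => t x i)]
      refine tsum_congr fun y => ?_
      by_cases hy : y = i
      · subst hy; simp
      · simp [hy, Prod.ext_iff, Ne.symm hy]
    · rw [if_neg h]
      refine mul_eq_zero.mpr (Or.inr ?_)
      exact ENNReal.tsum_eq_zero.mpr fun y => by
        simp [Prod.ext_iff, Ne.symm h]
  have hfm : ∀ i, fmass (ω.bind (gr t)) i = v i := by
    intro i
    rw [hv i]
    exact tsum_congr fun a => happ i a
  have hfst : fstM (ω.bind (gr t)) = v := by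
    ext i
    show fmass (ω.bind (gr t)) i = v i
    exact hfm i
  unfold hnorm
  rw [hfst]
  ext ⟨j, d⟩
  simp only [PMF.bind_apply]
  refine tsum_congr fun i => ?_
  rcases eq_or_ne (v i) 0 with h0 | h0
  · simp [h0]
  · congr 1
    have hne : fmass (ω.bind (gr t)) i ≠ 0 := by rw [hfm i]; exact h0
    have hsum : (∑' a, ω a * t a i) ≠ 0 := by rw [← hv i]; exact h0
    have : ncond (ω.bind (gr t)) i = c i := by
      ext a
      rw [show ncond (ω.bind (gr t)) i = _ from dif_pos hne]
      show (ω.bind (gr t)) (i, a) / fmass (ω.bind (gr t)) i = c i a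
      rw [happ i a, hc i hsum a, hfm i, hv i]
    rw [this]

end HyperNorm
end
end

section
/- The prior is recovered from the hyper conditional: for every ω ∈ D(A) and every n-test t : A → D(Fin n), μ(D(π₂)(ω‖t)) = ω, where π₂ : Fin n × D(A) → D(A) is the second projection, so that flattening the second marginal of ω‖t yields ω. -/
open scoped ENNReal

noncomputable section

namespace HyperNorm

variable {A B : Type*} {n m : ℕ}

lemma fmass_mul_ncond (ω : PMF (Fin n × A)) (i : Fin n) (a : A) :
    fmass ω i * ncond ω i a = ω (i, a) := by
  by_cases h : fmass ω i = 0
  · have : ω (i, a) = 0 := by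
      have hle : ω (i, a) ≤ fmass ω i := ENNReal.le_tsum a
      simpa [h] using hle
    simp [h, this]
  · simp only [ncond, ne_eq, h, not_false_eq_true, ↓reduceDIte]
    show fmass ω i * (ω (i, a) / fmass ω i) = ω (i, a)
    rw [ENNReal.mul_div_cancel h (fmass_ne_top ω i)]

/-- the prior is recovered from the hyper conditional:
`μ(D(π₂)(ω‖t)) = ω`, where `ω‖t = N(gr(t)_*(ω))`. -/
theorem hypcond_recover_prior (ω : PMF A) (t : A → PMF (Fin n)) :
    ((hnorm (ω.bind (gr t))).map Prod.snd).bind id = ω := by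
  classical
  set ν := ω.bind (gr t) with hν
  ext a
  have h1 : (((hnorm ν).map Prod.snd).bind id) a = ∑' i, fmass ν i * ncond ν i a := by
    simp only [hnorm, PMF.map_bind, PMF.pure_map, PMF.bind_bind, PMF.pure_bind, id]
    rw [PMF.bind_apply]
    rfl
  have h2 : ∀ i : Fin n, ν (i, a) = ω a * t a i := by
    intro i
    rw [hν, PMF.bind_apply]
    have : ∀ x : A, ω x * gr t x (i, a) = if x = a then ω a * t a i else 0 := by
      intro x
      simp only [gr, PMF.map_apply]
      split_ifs with hx
      · subst hx
        rw [tsum_eq_single i (by intro j hj; simp [Prod.ext_iff, Ne.symm hj])]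
        simp
      · rw [ENNReal.tsum_eq_zero.mpr]
        · simp
        · intro j
          simp [Prod.ext_iff, Ne.symm hx]
    simp_rw [this]
    rw [tsum_eq_single a (by intro x hx; simp [hx])]
    simp
  rw [h1]
  have h3 : ∀ i, fmass ν i * ncond ν i a = ω a * t a i := by
    intro i; rw [fmass_mul_ncond, h2]
  simp_rw [h3]
  rw [ENNReal.tsum_mul_left, (t a).tsum_coe, mul_one]

end HyperNorm
end
end
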